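/- There exist universal constants C > 0 and β > 0 with the following property. Let θ ∈ [0, 1), let n ≥ 1 be an integer with θ·n² ≤ 1, let v₀ ∈ ℤ², and let H : ℤ² → ℝ satisfy: H(v) ≥ 0 for every v with |v − v₀| ≤ 2n (Euclidean distance), and the massive discrete harmonicity H(v) = ((1 − θ)/4)·Σ_{u ∼ v} H(u) (sum over the four ℓ¹-neighbors u of v) for every v with |v − v₀| ≤ 2n − 1. Then for all v₁, v₂ ∈ ℤ² with |v₁ − v₀| ≤ n and |v₂ − v₀| ≤ n one has |H(v₂) − H(v₁)| ≤ C·(|v₂ − v₁|/n)^β · max{ H(v) : v ∈ ℤ², |v − v₀| ≤ 2n }. -/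

import Mathlib

/-- Vertices of the square lattice ℤ². -/
abbrev V : Type := ℤ × ℤ

/-- Euclidean distance between two lattice vertices. -/
noncomputable def eucDist (u v : V) : ℝ :=
  Real.sqrt (((u.1 - v.1 : ℤ) : ℝ) ^ 2 + ((u.2 - v.2 : ℤ) : ℝ) ^ 2)

/-- `H` is massive discrete harmonic with killing parameter `θ` at `v`:
`H(v) = ((1-θ)/4)·Σ_{u ∼ v} H(u)`, the sum over the four ℓ¹-neighbors of `v`. -/
def MassiveHarmonicAt (θ : ℝ) (H : V → ℝ) (v : V) : Prop :=
  H v = ((1 - θ) / 4) *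
    (H (v + (1, 0)) + H (v + (-1, 0)) + H (v + (0, 1)) + H (v + (0, -1)))

/- ## Euclidean distance helpers -/

lemma eucDist_nonneg (u v : V) : 0 ≤ eucDist u v := Real.sqrt_nonneg _

lemma eucDist_self (u : V) : eucDist u u = 0 := by simp [eucDist]

lemma eucDist_le_of_sq_le {u v : V} {t : ℝ} (ht : 0 ≤ t)
    (h : (((u.1 - v.1 : ℤ) : ℝ) ^ 2 + ((u.2 - v.2 : ℤ) : ℝ) ^ 2) ≤ t ^ 2) :
    eucDist u v ≤ t := by
  rw [eucDist]
  calc Real.sqrt _ ≤ Real.sqrt (t ^ 2) := Real.sqrt_le_sqrt h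
    _ = t := Real.sqrt_sq ht

lemma sq_le_of_eucDist_le {u v : V} {t : ℝ} (h : eucDist u v ≤ t) :
    (((u.1 - v.1 : ℤ) : ℝ) ^ 2 + ((u.2 - v.2 : ℤ) : ℝ) ^ 2) ≤ t ^ 2 := by
  have h0 : (0:ℝ) ≤ (((u.1 - v.1 : ℤ) : ℝ) ^ 2 + ((u.2 - v.2 : ℤ) : ℝ) ^ 2) := by positivity
  have h1 := Real.sq_sqrt h0
  rw [eucDist] at h
  nlinarith [Real.sqrt_nonneg ((((u.1 - v.1 : ℤ) : ℝ) ^ 2 + ((u.2 - v.2 : ℤ) : ℝ) ^ 2))]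

/-- embedding into the Euclidean plane -/
noncomputable def vemb (u : V) : EuclideanSpace ℝ (Fin 2) := WithLp.toLp 2 ![(u.1 : ℝ), (u.2 : ℝ)]

lemma eucDist_eq_dist (u v : V) : eucDist u v = dist (vemb u) (vemb v) := by
  rw [EuclideanSpace.dist_eq, eucDist]
  congr 1
  rw [Fin.sum_univ_two]
  simp [vemb, Real.dist_eq, sq_abs]

lemma eucDist_triangle (a b c : V) : eucDist a c ≤ eucDist a b + eucDist b c := by
  rw [eucDist_eq_dist, eucDist_eq_dist, eucDist_eq_dist]
  exact dist_triangle _ _ _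

lemma eucDist_comm (a b : V) : eucDist a b = eucDist b a := by
  rw [eucDist_eq_dist, eucDist_eq_dist]; exact dist_comm _ _

lemma one_le_eucDist {u v : V} (h : u ≠ v) : 1 ≤ eucDist u v := by
  have h1 : u.1 - v.1 ≠ 0 ∨ u.2 - v.2 ≠ 0 := by
    by_contra hc
    push_neg at hc
    exact h (Prod.ext (by omega) (by omega))
  have h2 : (1 : ℤ) ≤ (u.1 - v.1) ^ 2 + (u.2 - v.2) ^ 2 := by
    rcases h1 with h1 | h1
    · nlinarith [Int.one_le_abs h1, sq_abs (u.1 - v.1), sq_nonneg (u.2 - v.2), abs_nonneg (u.1-v.1)]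
    · nlinarith [Int.one_le_abs h1, sq_abs (u.2 - v.2), sq_nonneg (u.1 - v.1), abs_nonneg (u.2-v.2)]
  rw [eucDist]
  rw [show (1:ℝ) = Real.sqrt 1 from (Real.sqrt_one).symm]
  apply Real.sqrt_le_sqrt
  exact_mod_cast h2

lemma eucDist_coord {u v : V} {t : ℝ} (h : eucDist u v ≤ t) :
    ((|u.1 - v.1| : ℤ) : ℝ) ≤ t ∧ ((|u.2 - v.2| : ℤ) : ℝ) ≤ t := by
  have h2 := sq_le_of_eucDist_le h
  have ht : 0 ≤ t := le_trans (eucDist_nonneg u v) h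
  constructor
  · have : ((|u.1 - v.1| : ℤ) : ℝ) = |((u.1 - v.1 : ℤ) : ℝ)| := by push_cast; ring
    rw [this]
    nlinarith [sq_abs (((u.1 - v.1 : ℤ) : ℝ)), abs_nonneg (((u.1 - v.1 : ℤ) : ℝ)), sq_nonneg (((u.2 - v.2 : ℤ) : ℝ))]
  · have : ((|u.2 - v.2| : ℤ) : ℝ) = |((u.2 - v.2 : ℤ) : ℝ)| := by push_cast; ring
    rw [this]
    nlinarith [sq_abs (((u.2 - v.2 : ℤ) : ℝ)), abs_nonneg (((u.2 - v.2 : ℤ) : ℝ)), sq_nonneg (((u.1 - v.1 : ℤ) : ℝ))]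

lemma eucDist_unit (x : V) (e : V) (he : e.1 ^ 2 + e.2 ^ 2 = 1) : eucDist (x + e) x = 1 := by
  rw [eucDist]
  have h1 : (x + e).1 - x.1 = e.1 := by simp
  have h2 : (x + e).2 - x.2 = e.2 := by simp
  rw [h1, h2]
  rw [show (((e.1 : ℤ) : ℝ) ^ 2 + ((e.2 : ℤ) : ℝ) ^ 2) = 1 by exact_mod_cast congrArg (fun z : ℤ => (z : ℝ)) he]
  exact Real.sqrt_one

/- ## Rotated coordinates and the barrier function -/

def pA (w x : V) : ℤ := (x.1 - w.1) + (x.2 - w.2)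
def pB (w x : V) : ℤ := (x.1 - w.1) - (x.2 - w.2)

lemma pA_self (w : V) : pA w w = 0 := by simp [pA]
lemma pB_self (w : V) : pB w w = 0 := by simp [pB]

lemma pA_add (w x d : V) : pA w (x + d) = pA w x + (d.1 + d.2) := by
  simp [pA, Prod.fst_add, Prod.snd_add]; ring
lemma pB_add (w x d : V) : pB w (x + d) = pB w x + (d.1 - d.2) := by
  simp [pB, Prod.fst_add, Prod.snd_add]; ring

/-- the barrier, as a function of the four rotated coordinates -/
def Zfun (R ax bx ay cy : ℤ) : ℤ :=
  ax ^ 2 + bx ^ 2 + ay ^ 2 + cy ^ 2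
    + 2 * (4 * R * |ax - ay| - |ax - ay| ^ 2)
    + 2 * (4 * R * |bx - cy| - |bx - cy| ^ 2)

def Zb (R : ℤ) (w x y : V) : ℤ := Zfun R (pA w x) (pB w x) (pA w y) (pB w y)

lemma gstep (R a : ℤ) (ha : a ≠ 0) (he : Even a) :
    (4 * R * |a + 2| - |a + 2| ^ 2) + (4 * R * |a - 2| - |a - 2| ^ 2)
      = 2 * (4 * R * |a| - |a| ^ 2) - 8 := by
  rcases he with ⟨k, hk⟩
  have h2 : 2 ≤ a ∨ a ≤ -2 := by omega
  rcases h2 with h | h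
  · rw [abs_of_nonneg (by omega : (0:ℤ) ≤ a + 2), abs_of_nonneg (by omega : (0:ℤ) ≤ a - 2),
      abs_of_nonneg (by omega : (0:ℤ) ≤ a)]
    ring
  · rw [abs_of_nonpos (by omega : a + 2 ≤ 0), abs_of_nonpos (by omega : a - 2 ≤ 0),
      abs_of_nonpos (by omega : a ≤ 0)]
    ring

lemma ZS_int (R ax bx ay cy : ℤ) (ha : ax ≠ ay) (he : Even (ax - ay)) :
    Zfun R (ax+1) (bx+1) (ay-1) (cy+1) + Zfun R (ax+1) (bx-1) (ay-1) (cy-1)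
  + Zfun R (ax-1) (bx-1) (ay+1) (cy-1) + Zfun R (ax-1) (bx+1) (ay+1) (cy+1)
  = 4 * Zfun R ax bx ay cy - 16 := by
  have hstep := gstep R (ax - ay) (by omega) he
  simp only [Zfun]
  rw [show ax + 1 - (ay - 1) = (ax - ay) + 2 by ring,
      show ax - 1 - (ay + 1) = (ax - ay) - 2 by ring,
      show bx + 1 - (cy + 1) = bx - cy by ring,
      show bx - 1 - (cy - 1) = bx - cy by ring]
  linear_combination 4 * hstep

lemma ZT_int (R ax bx ay cy : ℤ) (hb : bx ≠ cy) (he : Even (bx - cy)) :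
    Zfun R (ax+1) (bx+1) (ay+1) (cy-1) + Zfun R (ax+1) (bx-1) (ay+1) (cy+1)
  + Zfun R (ax-1) (bx-1) (ay-1) (cy+1) + Zfun R (ax-1) (bx+1) (ay-1) (cy-1)
  = 4 * Zfun R ax bx ay cy - 16 := by
  have hstep := gstep R (bx - cy) (by omega) he
  simp only [Zfun]
  rw [show bx + 1 - (cy - 1) = (bx - cy) + 2 by ring,
      show bx - 1 - (cy + 1) = (bx - cy) - 2 by ring,
      show ax + 1 - (ay + 1) = ax - ay by ring,
      show ax - 1 - (ay - 1) = ax - ay by ring]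
  linear_combination 4 * hstep

lemma Zfun_nonneg {R ax bx ay cy : ℤ} (hax : |ax| ≤ R) (hbx : |bx| ≤ R)
    (hay : |ay| ≤ R) (hcy : |cy| ≤ R) (hR : 0 ≤ R) : 0 ≤ Zfun R ax bx ay cy := by
  have h1 : |ax - ay| ≤ 2 * R := by
    calc |ax - ay| ≤ |ax| + |ay| := abs_sub _ _
      _ ≤ 2 * R := by omega
  have h2 : |bx - cy| ≤ 2 * R := by
    calc |bx - cy| ≤ |bx| + |cy| := abs_sub _ _
      _ ≤ 2 * R := by omega
  have g1 : 0 ≤ 4 * R * |ax - ay| - |ax - ay| ^ 2 := by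
    nlinarith [abs_nonneg (ax - ay)]
  have g2 : 0 ≤ 4 * R * |bx - cy| - |bx - cy| ^ 2 := by
    nlinarith [abs_nonneg (bx - cy)]
  have := sq_nonneg ax; have := sq_nonneg bx; have := sq_nonneg ay; have := sq_nonneg cy
  simp only [Zfun]; nlinarith

/- ## unit move lemmas for rotated coordinates -/

lemma pA_e1 (w x : V) : pA w (x + (1,0)) = pA w x + 1 := by rw [pA_add]; norm_num
lemma pA_e2 (w x : V) : pA w (x + (0,1)) = pA w x + 1 := by rw [pA_add]; norm_num
lemma pA_m1 (w x : V) : pA w (x + (-1,0)) = pA w x - 1 := by rw [pA_add]; norm_num; ring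
lemma pA_m2 (w x : V) : pA w (x + (0,-1)) = pA w x - 1 := by rw [pA_add]; norm_num; ring
lemma pB_e1 (w x : V) : pB w (x + (1,0)) = pB w x + 1 := by rw [pB_add]; norm_num
lemma pB_e2 (w x : V) : pB w (x + (0,1)) = pB w x - 1 := by rw [pB_add]; norm_num; ring
lemma pB_m1 (w x : V) : pB w (x + (-1,0)) = pB w x - 1 := by rw [pB_add]; norm_num; ring
lemma pB_m2 (w x : V) : pB w (x + (0,-1)) = pB w x + 1 := by rw [pB_add]; norm_num

/- ## the two couplings: difference recursions -/

lemma Frec_S (θ : ℝ) (H : V → ℝ) (x y : V)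
    (hx : MassiveHarmonicAt θ H x) (hy : MassiveHarmonicAt θ H y) :
    H x - H y = ((1 - θ) / 4) *
      ((H (x + (1,0)) - H (y + (0,-1))) + (H (x + (0,1)) - H (y + (-1,0)))
      + (H (x + (-1,0)) - H (y + (0,1))) + (H (x + (0,-1)) - H (y + (1,0)))) := by
  rw [MassiveHarmonicAt] at hx hy
  rw [hx, hy]; ring

lemma Frec_T (θ : ℝ) (H : V → ℝ) (x y : V)
    (hx : MassiveHarmonicAt θ H x) (hy : MassiveHarmonicAt θ H y) :
    H x - H y = ((1 - θ) / 4) *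
      ((H (x + (1,0)) - H (y + (0,1))) + (H (x + (0,1)) - H (y + (1,0)))
      + (H (x + (-1,0)) - H (y + (0,-1))) + (H (x + (0,-1)) - H (y + (-1,0)))) := by
  rw [MassiveHarmonicAt] at hx hy
  rw [hx, hy]; ring

lemma abs_comb {θ a b c d s : ℝ} (hθ0 : 0 ≤ θ) (hθ1 : θ < 1)
    (h : s = ((1 - θ) / 4) * (a + b + c + d)) :
    |s| ≤ (1/4) * (|a| + |b| + |c| + |d|) := by
  have h1 : |a + b + c + d| ≤ |a| + |b| + |c| + |d| := by
    calc |a + b + c + d| ≤ |a + b + c| + |d| := abs_add_le _ _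
      _ ≤ |a + b| + |c| + |d| := by linarith [abs_add_le (a+b) c]
      _ ≤ |a| + |b| + |c| + |d| := by linarith [abs_add_le a b]
  rw [h, abs_mul, abs_of_nonneg (by linarith : (0:ℝ) ≤ (1 - θ) / 4)]
  nlinarith [abs_nonneg (a + b + c + d), abs_nonneg a, abs_nonneg b, abs_nonneg c, abs_nonneg d]

lemma box_to_ball (w x : V) (r : ℤ) (hr : 0 ≤ r) (h1 : |pA w x| ≤ r) (h2 : |pB w x| ≤ r) :
    eucDist x w ≤ (r : ℝ) := by
  apply eucDist_le_of_sq_le (by positivity)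
  have e : pA w x ^ 2 + pB w x ^ 2 = 2 * ((x.1 - w.1) ^ 2 + (x.2 - w.2) ^ 2) := by
    simp only [pA, pB]; ring
  have key : (x.1 - w.1) ^ 2 + (x.2 - w.2) ^ 2 ≤ r ^ 2 := by
    nlinarith [mul_self_le_mul_self (abs_nonneg (pA w x)) h1,
      mul_self_le_mul_self (abs_nonneg (pB w x)) h2, sq_abs (pA w x), sq_abs (pB w x)]
  exact_mod_cast key

/- ## the finite pair domain -/

noncomputable def pairD (R : ℤ) (w : V) : Finset (V × V) :=
  ((Finset.Icc (w.1 - R, w.2 - R) (w.1 + R, w.2 + R)) ×ˢ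
   (Finset.Icc (w.1 - R, w.2 - R) (w.1 + R, w.2 + R))).filter
    (fun z => |pA w z.1| ≤ R ∧ |pB w z.1| ≤ R ∧ |pA w z.2| ≤ R ∧ |pB w z.2| ≤ R ∧
      Even (pA w z.1 - pA w z.2))

lemma mem_pairD {R : ℤ} {w : V} {u v : V} :
    (u, v) ∈ pairD R w ↔ |pA w u| ≤ R ∧ |pB w u| ≤ R ∧ |pA w v| ≤ R ∧ |pB w v| ≤ R ∧
      Even (pA w u - pA w v) := by
  simp only [pairD, Finset.mem_filter, Finset.mem_product, Finset.mem_Icc, Prod.le_def]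
  constructor
  · tauto
  · intro h
    obtain ⟨h1, h2, h3, h4, h5⟩ := h
    have h1' := h1; have h2' := h2; have h3' := h3; have h4' := h4
    simp only [abs_le, pA, pB] at h1' h2' h3' h4'
    refine ⟨⟨⟨⟨?_, ?_⟩, ?_, ?_⟩, ⟨⟨?_, ?_⟩, ?_, ?_⟩⟩, h1, h2, h3, h4, h5⟩ <;> omega

def pairF (H : V → ℝ) (c : ℝ) (R : ℤ) (w : V) (z : V × V) : ℝ :=
  |H z.1 - H z.2| - c * ((Zb R w z.1 z.2 : ℤ) : ℝ)

lemma pairF_mk (H : V → ℝ) (c : ℝ) (R : ℤ) (w : V) (u v : V) :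
    pairF H c R w (u, v) = |H u - H v| - c * ((Zb R w u v : ℤ) : ℝ) := rfl

/- ## the key coupling estimate -/

set_option maxHeartbeats 1000000 in
lemma barrier (θ : ℝ) (hθ0 : 0 ≤ θ) (hθ1 : θ < 1)
    (n : ℕ) (hn : 4 ≤ n) (v₀ : V) (H : V → ℝ) (M : ℝ) (hMpos : 0 < M)
    (hHM : ∀ v : V, eucDist v v₀ ≤ 2 * n → 0 ≤ H v ∧ H v ≤ M)
    (hharm : ∀ v : V, eucDist v v₀ ≤ 2 * n - 1 → MassiveHarmonicAt θ H v)
    (w : V) (hw : eucDist w v₀ ≤ (n : ℝ) + 1)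
    (y : V) (hyA : |pA w y| ≤ (n : ℤ) - 2) (hyB : |pB w y| ≤ (n : ℤ) - 2)
    (hpar : Even (pA w y)) :
    |H w - H y| ≤ (2 * M / ((n : ℝ) - 2) ^ 2) * ((Zb ((n:ℤ)-1) w w y : ℤ) : ℝ) := by
  set R : ℤ := (n : ℤ) - 1 with hRdef
  have hn4 : (4 : ℤ) ≤ (n : ℤ) := by exact_mod_cast hn
  have hn4R : (4 : ℝ) ≤ (n : ℝ) := by exact_mod_cast hn
  have hR3 : 3 ≤ R := by omega
  have hR0 : 0 ≤ R := by omega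
  set c : ℝ := 2 * M / ((n : ℝ) - 2) ^ 2 with hcdef
  have hden : (0:ℝ) < ((n : ℝ) - 2) ^ 2 := by nlinarith
  have hc0 : 0 < c := by positivity
  -- balls
  have hball : ∀ x : V, |pA w x| ≤ R → |pB w x| ≤ R → eucDist x v₀ ≤ 2 * (n:ℝ) := by
    intro x h1 h2
    have h3 : eucDist x w ≤ ((R : ℤ) : ℝ) := box_to_ball w x R hR0 h1 h2
    have h4 := eucDist_triangle x w v₀
    have h5 : ((R : ℤ) : ℝ) = (n : ℝ) - 1 := by push_cast [hRdef]; ring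
    linarith
  have hharm' : ∀ x : V, |pA w x| ≤ R - 1 → |pB w x| ≤ R - 1 → MassiveHarmonicAt θ H x := by
    intro x h1 h2
    have h3 : eucDist x w ≤ ((R - 1 : ℤ) : ℝ) := box_to_ball w x (R-1) (by omega) h1 h2
    have h4 := eucDist_triangle x w v₀
    have h5 : ((R - 1 : ℤ) : ℝ) = (n : ℝ) - 2 := by push_cast [hRdef]; ring
    exact hharm x (by linarith)
  have habs1 : ∀ z : ℤ, |z| ≤ R - 1 → |z + 1| ≤ R ∧ |z - 1| ≤ R := by
    intro z h; rw [abs_le] at h; constructor <;> rw [abs_le] <;> omega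
  -- the maximum principle
  have hwy : (w, y) ∈ pairD R w := by
    rw [mem_pairD]
    rw [pA_self, pB_self]
    refine ⟨by simpa using hR0, by simpa using hR0, by omega, by omega, ?_⟩
    rw [zero_sub]
    exact hpar.neg
  obtain ⟨m, hmD, hmax⟩ := Finset.exists_max_image (pairD R w) (pairF H c R w) ⟨(w, y), hwy⟩
  have hfm : pairF H c R w m ≤ 0 := by
    obtain ⟨mx, my⟩ := m
    rw [mem_pairD] at hmD
    obtain ⟨b1, b2, b3, b4, b5⟩ := hmD
    by_cases hdiag : mx = my
    · subst hdiag
      have hZ0 : 0 ≤ Zb R w mx mx := Zfun_nonneg b1 b2 b1 b2 hR0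
      rw [pairF_mk, sub_self, abs_zero, zero_sub, neg_nonpos]
      exact mul_nonneg hc0.le (by exact_mod_cast hZ0)
    · by_cases hint : |pA w mx| ≤ R - 1 ∧ |pB w mx| ≤ R - 1 ∧ |pA w my| ≤ R - 1 ∧ |pB w my| ≤ R - 1
      · exfalso
        obtain ⟨i1, i2, i3, i4⟩ := hint
        have hmx := hharm' mx i1 i2
        have hmy := hharm' my i3 i4
        have hab : pA w mx ≠ pA w my ∨ pB w mx ≠ pB w my := by
          by_contra hc
          push_neg at hc
          obtain ⟨e1, e2⟩ := hc
          apply hdiag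
          simp only [pA, pB] at e1 e2
          exact Prod.ext (by omega) (by omega)
        have hparb : Even (pB w mx - pB w my) := by
          have heq : pA w mx - pA w my - (pB w mx - pB w my) = 2 * (mx.2 - my.2) := by
            simp only [pA, pB]; ring
          rcases b5 with ⟨k, hk⟩
          exact ⟨mx.2 - my.2 - k + (pB w mx - pB w my), by omega⟩
        rcases hab with ha | hb
        · -- S-coupling
          have m1 : (mx + ((1:ℤ),(0:ℤ)), my + ((0:ℤ),(-1:ℤ))) ∈ pairD R w := by
            rw [mem_pairD, pA_e1, pB_e1, pA_m2, pB_m2]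
            refine ⟨(habs1 _ i1).1, (habs1 _ i2).1, (habs1 _ i3).2, (habs1 _ i4).1, ?_⟩
            have : pA w mx + 1 - (pA w my - 1) = pA w mx - pA w my + 2 := by ring
            rw [this]
            exact b5.add even_two
          have m2 : (mx + ((0:ℤ),(1:ℤ)), my + ((-1:ℤ),(0:ℤ))) ∈ pairD R w := by
            rw [mem_pairD, pA_e2, pB_e2, pA_m1, pB_m1]
            refine ⟨(habs1 _ i1).1, (habs1 _ i2).2, (habs1 _ i3).2, (habs1 _ i4).2, ?_⟩
            have : pA w mx + 1 - (pA w my - 1) = pA w mx - pA w my + 2 := by ring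
            rw [this]
            exact b5.add even_two
          have m3 : (mx + ((-1:ℤ),(0:ℤ)), my + ((0:ℤ),(1:ℤ))) ∈ pairD R w := by
            rw [mem_pairD, pA_m1, pB_m1, pA_e2, pB_e2]
            refine ⟨(habs1 _ i1).2, (habs1 _ i2).2, (habs1 _ i3).1, (habs1 _ i4).2, ?_⟩
            have : pA w mx - 1 - (pA w my + 1) = pA w mx - pA w my - 2 := by ring
            rw [this]
            exact b5.sub even_two
          have m4 : (mx + ((0:ℤ),(-1:ℤ)), my + ((1:ℤ),(0:ℤ))) ∈ pairD R w := by
            rw [mem_pairD, pA_m2, pB_m2, pA_e1, pB_e1]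
            refine ⟨(habs1 _ i1).2, (habs1 _ i2).1, (habs1 _ i3).1, (habs1 _ i4).1, ?_⟩
            have : pA w mx - 1 - (pA w my + 1) = pA w mx - pA w my - 2 := by ring
            rw [this]
            exact b5.sub even_two
          have h1 := hmax _ m1
          have h2 := hmax _ m2
          have h3 := hmax _ m3
          have h4 := hmax _ m4
          simp only [pairF_mk] at h1 h2 h3 h4
          have hzs_int := ZS_int R (pA w mx) (pB w mx) (pA w my) (pB w my) ha b5
          have hzsZ : Zb R w (mx + ((1:ℤ),(0:ℤ))) (my + ((0:ℤ),(-1:ℤ)))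
              + Zb R w (mx + ((0:ℤ),(1:ℤ))) (my + ((-1:ℤ),(0:ℤ)))
              + Zb R w (mx + ((-1:ℤ),(0:ℤ))) (my + ((0:ℤ),(1:ℤ)))
              + Zb R w (mx + ((0:ℤ),(-1:ℤ))) (my + ((1:ℤ),(0:ℤ)))
              = 4 * Zb R w mx my - 16 := by
            simp only [Zb, pA_e1, pB_e1, pA_e2, pB_e2, pA_m1, pB_m1, pA_m2, pB_m2]
            exact hzs_int
          have hzs : ((Zb R w (mx + ((1:ℤ),(0:ℤ))) (my + ((0:ℤ),(-1:ℤ))) : ℤ) : ℝ)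
              + ((Zb R w (mx + ((0:ℤ),(1:ℤ))) (my + ((-1:ℤ),(0:ℤ))) : ℤ) : ℝ)
              + ((Zb R w (mx + ((-1:ℤ),(0:ℤ))) (my + ((0:ℤ),(1:ℤ))) : ℤ) : ℝ)
              + ((Zb R w (mx + ((0:ℤ),(-1:ℤ))) (my + ((1:ℤ),(0:ℤ))) : ℤ) : ℝ)
              = 4 * ((Zb R w mx my : ℤ) : ℝ) - 16 := by exact_mod_cast hzsZ
          have hrec := Frec_S θ H mx my hmx hmy
          have habs := abs_comb hθ0 hθ1 hrec
          have hzs' : c * (((Zb R w (mx + ((1:ℤ),(0:ℤ))) (my + ((0:ℤ),(-1:ℤ))) : ℤ) : ℝ)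
              + ((Zb R w (mx + ((0:ℤ),(1:ℤ))) (my + ((-1:ℤ),(0:ℤ))) : ℤ) : ℝ)
              + ((Zb R w (mx + ((-1:ℤ),(0:ℤ))) (my + ((0:ℤ),(1:ℤ))) : ℤ) : ℝ)
              + ((Zb R w (mx + ((0:ℤ),(-1:ℤ))) (my + ((1:ℤ),(0:ℤ))) : ℤ) : ℝ))
              = c * (4 * ((Zb R w mx my : ℤ) : ℝ) - 16) := by rw [hzs]
          nlinarith [h1, h2, h3, h4, habs, hzs', hc0]
        · -- T-coupling
          have m1 : (mx + ((1:ℤ),(0:ℤ)), my + ((0:ℤ),(1:ℤ))) ∈ pairD R w := by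
            rw [mem_pairD, pA_e1, pB_e1, pA_e2, pB_e2]
            exact ⟨(habs1 _ i1).1, (habs1 _ i2).1, (habs1 _ i3).1, (habs1 _ i4).2,
              by have : pA w mx + 1 - (pA w my + 1) = pA w mx - pA w my := by ring
                 rw [this]; exact b5⟩
          have m2 : (mx + ((0:ℤ),(1:ℤ)), my + ((1:ℤ),(0:ℤ))) ∈ pairD R w := by
            rw [mem_pairD, pA_e2, pB_e2, pA_e1, pB_e1]
            exact ⟨(habs1 _ i1).1, (habs1 _ i2).2, (habs1 _ i3).1, (habs1 _ i4).1,
              by have : pA w mx + 1 - (pA w my + 1) = pA w mx - pA w my := by ring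
                 rw [this]; exact b5⟩
          have m3 : (mx + ((-1:ℤ),(0:ℤ)), my + ((0:ℤ),(-1:ℤ))) ∈ pairD R w := by
            rw [mem_pairD, pA_m1, pB_m1, pA_m2, pB_m2]
            exact ⟨(habs1 _ i1).2, (habs1 _ i2).2, (habs1 _ i3).2, (habs1 _ i4).1,
              by have : pA w mx - 1 - (pA w my - 1) = pA w mx - pA w my := by ring
                 rw [this]; exact b5⟩
          have m4 : (mx + ((0:ℤ),(-1:ℤ)), my + ((-1:ℤ),(0:ℤ))) ∈ pairD R w := by
            rw [mem_pairD, pA_m2, pB_m2, pA_m1, pB_m1]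
            exact ⟨(habs1 _ i1).2, (habs1 _ i2).1, (habs1 _ i3).2, (habs1 _ i4).2,
              by have : pA w mx - 1 - (pA w my - 1) = pA w mx - pA w my := by ring
                 rw [this]; exact b5⟩
          have h1 := hmax _ m1
          have h2 := hmax _ m2
          have h3 := hmax _ m3
          have h4 := hmax _ m4
          simp only [pairF_mk] at h1 h2 h3 h4
          have hzt_int := ZT_int R (pA w mx) (pB w mx) (pA w my) (pB w my) hb hparb
          have hzsZ : Zb R w (mx + ((1:ℤ),(0:ℤ))) (my + ((0:ℤ),(1:ℤ)))
              + Zb R w (mx + ((0:ℤ),(1:ℤ))) (my + ((1:ℤ),(0:ℤ)))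
              + Zb R w (mx + ((-1:ℤ),(0:ℤ))) (my + ((0:ℤ),(-1:ℤ)))
              + Zb R w (mx + ((0:ℤ),(-1:ℤ))) (my + ((-1:ℤ),(0:ℤ)))
              = 4 * Zb R w mx my - 16 := by
            simp only [Zb, pA_e1, pB_e1, pA_e2, pB_e2, pA_m1, pB_m1, pA_m2, pB_m2]
            exact hzt_int
          have hzs : ((Zb R w (mx + ((1:ℤ),(0:ℤ))) (my + ((0:ℤ),(1:ℤ))) : ℤ) : ℝ)
              + ((Zb R w (mx + ((0:ℤ),(1:ℤ))) (my + ((1:ℤ),(0:ℤ))) : ℤ) : ℝ)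
              + ((Zb R w (mx + ((-1:ℤ),(0:ℤ))) (my + ((0:ℤ),(-1:ℤ))) : ℤ) : ℝ)
              + ((Zb R w (mx + ((0:ℤ),(-1:ℤ))) (my + ((-1:ℤ),(0:ℤ))) : ℤ) : ℝ)
              = 4 * ((Zb R w mx my : ℤ) : ℝ) - 16 := by exact_mod_cast hzsZ
          have hrec := Frec_T θ H mx my hmx hmy
          have habs := abs_comb hθ0 hθ1 hrec
          have hzs' : c * (((Zb R w (mx + ((1:ℤ),(0:ℤ))) (my + ((0:ℤ),(1:ℤ))) : ℤ) : ℝ)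
              + ((Zb R w (mx + ((0:ℤ),(1:ℤ))) (my + ((1:ℤ),(0:ℤ))) : ℤ) : ℝ)
              + ((Zb R w (mx + ((-1:ℤ),(0:ℤ))) (my + ((0:ℤ),(-1:ℤ))) : ℤ) : ℝ)
              + ((Zb R w (mx + ((0:ℤ),(-1:ℤ))) (my + ((-1:ℤ),(0:ℤ))) : ℤ) : ℝ))
              = c * (4 * ((Zb R w mx my : ℤ) : ℝ) - 16) := by rw [hzs]
          nlinarith [h1, h2, h3, h4, habs, hzs', hc0]
      · -- outer boundary
        have hFle : |H mx - H my| ≤ 2 * M := by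
          obtain ⟨p1, p2⟩ := hHM mx (hball mx b1 b2)
          obtain ⟨p3, p4⟩ := hHM my (hball my b3 b4)
          rw [abs_le]; constructor <;> linarith
        have hZge : (R - 1) ^ 2 ≤ Zb R w mx my := by
          have g1 : 0 ≤ 4 * R * |pA w mx - pA w my| - |pA w mx - pA w my| ^ 2 := by
            have : |pA w mx - pA w my| ≤ 2 * R := by
              calc |pA w mx - pA w my| ≤ |pA w mx| + |pA w my| := abs_sub _ _
                _ ≤ 2 * R := by omega
            nlinarith [abs_nonneg (pA w mx - pA w my)]
          have g2 : 0 ≤ 4 * R * |pB w mx - pB w my| - |pB w mx - pB w my| ^ 2 := by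
            have : |pB w mx - pB w my| ≤ 2 * R := by
              calc |pB w mx - pB w my| ≤ |pB w mx| + |pB w my| := abs_sub _ _
                _ ≤ 2 * R := by omega
            nlinarith [abs_nonneg (pB w mx - pB w my)]
          push_neg at hint
          have hbig : R ≤ |pA w mx| ∨ R ≤ |pB w mx| ∨ R ≤ |pA w my| ∨ R ≤ |pB w my| := by
            by_contra hc
            push_neg at hc
            obtain ⟨c1, c2, c3, c4⟩ := hc
            have := hint (by omega) (by omega) (by omega)
            omega
          have hsq : (R-1)^2 ≤ pA w mx ^2 + pB w mx ^2 + pA w my ^2 + pB w my ^2 := by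
            rcases hbig with h | h | h | h <;>
              nlinarith [sq_abs (pA w mx), sq_abs (pB w mx), sq_abs (pA w my), sq_abs (pB w my),
                sq_nonneg (pA w mx), sq_nonneg (pB w mx), sq_nonneg (pA w my), sq_nonneg (pB w my),
                abs_nonneg (pA w mx), abs_nonneg (pB w mx), abs_nonneg (pA w my), abs_nonneg (pB w my)]
          simp only [Zb, Zfun]
          nlinarith [g1, g2]
        have hZreal : ((n:ℝ) - 2) ^ 2 ≤ ((Zb R w mx my : ℤ) : ℝ) := by
          have : (((R - 1)^2 : ℤ) : ℝ) ≤ ((Zb R w mx my : ℤ) : ℝ) := by exact_mod_cast hZge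
          have e : (((R - 1)^2 : ℤ) : ℝ) = ((n:ℝ) - 2)^2 := by push_cast [hRdef]; ring
          linarith
        have : 2 * M ≤ c * ((Zb R w mx my : ℤ) : ℝ) := by
          have hc2 : c * ((n:ℝ) - 2)^2 = 2 * M := by
            rw [hcdef]; field_simp [show (n:ℝ) - 2 ≠ 0 by linarith]
          nlinarith [hc0, hZreal]
        rw [pairF_mk]
        linarith
  have hfwy := hmax _ hwy
  rw [pairF_mk] at hfwy
  linarith [hfwy, hfm]

lemma le_of_sq_le_sq' {a b : ℝ} (ha : 0 ≤ a) (hb : 0 ≤ b) (h : a^2 ≤ b^2) : a ≤ b := by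
  calc a = Real.sqrt (a^2) := (Real.sqrt_sq ha).symm
    _ ≤ Real.sqrt (b^2) := Real.sqrt_le_sqrt h
    _ = b := Real.sqrt_sq hb

set_option maxHeartbeats 1600000 in
lemma even_case (θ : ℝ) (hθ0 : 0 ≤ θ) (hθ1 : θ < 1)
    (n : ℕ) (hn1 : 1 ≤ n) (v₀ : V) (H : V → ℝ) (M : ℝ) (hM0 : 0 ≤ M)
    (hHM : ∀ v : V, eucDist v v₀ ≤ 2 * n → 0 ≤ H v ∧ H v ≤ M)
    (hharm : ∀ v : V, eucDist v v₀ ≤ 2 * n - 1 → MassiveHarmonicAt θ H v)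
    (x y : V) (hx : eucDist x v₀ ≤ (n:ℝ) + 1) (hy : eucDist y v₀ ≤ (n:ℝ) + 1)
    (hpar : Even ((x.1 - y.1) + (x.2 - y.2))) :
    |H x - H y| ≤ 150 * M * eucDist x y / n := by
  have hn0 : (0:ℝ) < n := by exact_mod_cast hn1
  have hn1R : (1:ℝ) ≤ n := by exact_mod_cast hn1
  by_cases hxy : x = y
  · subst hxy
    simp [eucDist_self]
  have hd1 : 1 ≤ eucDist x y := one_le_eucDist hxy
  have hd0 : 0 ≤ eucDist x y := by linarith
  have hxball : eucDist x v₀ ≤ 2 * n := by linarith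
  have hyball : eucDist y v₀ ≤ 2 * n := by linarith
  have hFM : |H x - H y| ≤ M := by
    obtain ⟨p1, p2⟩ := hHM x hxball
    obtain ⟨p3, p4⟩ := hHM y hyball
    rw [abs_le]; constructor <;> linarith
  by_cases hMp : 0 < M
  swap
  · have hMeq : M = 0 := le_antisymm (not_lt.mp hMp) hM0
    have h0 : |H x - H y| ≤ 0 := by rw [← hMeq]; exact hFM
    have : 0 ≤ 150 * M * eucDist x y / n := by rw [hMeq]; simp
    linarith
  by_cases hmain : 4 ≤ n ∧ 2 * eucDist x y ≤ (n:ℝ) - 3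
  · obtain ⟨hn4, hdsmall⟩ := hmain
    have hn4R : (4:ℝ) ≤ n := by exact_mod_cast hn4
    set d := eucDist x y with hddef
    -- squared distance identity
    have hS0 : (0:ℝ) ≤ (((x.1 - y.1 : ℤ) : ℝ) ^ 2 + ((x.2 - y.2 : ℤ) : ℝ) ^ 2) := by positivity
    have hdsq : d ^ 2 = (((x.1 - y.1 : ℤ) : ℝ) ^ 2 + ((x.2 - y.2 : ℤ) : ℝ) ^ 2) := by
      rw [hddef, eucDist]; exact Real.sq_sqrt hS0
    push_cast at hdsq
    -- coordinate bounds
    have hsqA : ((pA x y : ℤ) : ℝ) ^ 2 ≤ 2 * d ^ 2 := by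
      have : (pA x y) ^ 2 ≤ 2 * ((x.1 - y.1) ^ 2 + (x.2 - y.2) ^ 2) := by
        simp only [pA]; nlinarith [sq_nonneg ((y.1 - x.1) - (y.2 - x.2))]
      have hc : (((pA x y) ^ 2 : ℤ) : ℝ) ≤ ((2 * ((x.1 - y.1) ^ 2 + (x.2 - y.2) ^ 2) : ℤ) : ℝ) := by
        exact_mod_cast this
      push_cast at hc
      nlinarith [hdsq]
    have hsqB : ((pB x y : ℤ) : ℝ) ^ 2 ≤ 2 * d ^ 2 := by
      have : (pB x y) ^ 2 ≤ 2 * ((x.1 - y.1) ^ 2 + (x.2 - y.2) ^ 2) := by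
        simp only [pB]; nlinarith [sq_nonneg ((y.1 - x.1) + (y.2 - x.2))]
      have hc : (((pB x y) ^ 2 : ℤ) : ℝ) ≤ ((2 * ((x.1 - y.1) ^ 2 + (x.2 - y.2) ^ 2) : ℤ) : ℝ) := by
        exact_mod_cast this
      push_cast at hc
      nlinarith [hdsq]
    have hAbnd : ((|pA x y| : ℤ) : ℝ) ≤ (n:ℝ) - 2 := by
      rw [Int.cast_abs]
      apply le_of_sq_le_sq' (abs_nonneg _) (by linarith)
      rw [sq_abs]
      nlinarith [hsqA, hd1, hdsmall]
    have hBbnd : ((|pB x y| : ℤ) : ℝ) ≤ (n:ℝ) - 2 := by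
      rw [Int.cast_abs]
      apply le_of_sq_le_sq' (abs_nonneg _) (by linarith)
      rw [sq_abs]
      nlinarith [hsqB, hd1, hdsmall]
    have hAint : |pA x y| ≤ (n:ℤ) - 2 := by exact_mod_cast hAbnd
    have hBint : |pB x y| ≤ (n:ℤ) - 2 := by exact_mod_cast hBbnd
    have hparA : Even (pA x y) := by
      have e : pA x y = -((x.1 - y.1) + (x.2 - y.2)) := by simp only [pA]; ring
      rw [e]; exact hpar.neg
    have hbar := barrier θ hθ0 hθ1 n hn4 v₀ H M hMp hHM hharm x hx y hAint hBint hparA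
    -- bound the barrier value
    have hZval : ((Zb ((n:ℤ)-1) x x y : ℤ) : ℝ) ≤ 16 * ((n:ℝ) - 1) * d := by
      have e : Zb ((n:ℤ)-1) x x y = Zfun ((n:ℤ)-1) 0 0 (pA x y) (pB x y) := by
        rw [Zb, pA_self, pB_self]
      rw [e]
      simp only [Zfun, zero_sub, abs_neg]
      push_cast
      set P := ((|pA x y| : ℤ) : ℝ) with hPdef
      set Q := ((|pB x y| : ℤ) : ℝ) with hQdef
      have hP0 : 0 ≤ P := by rw [hPdef]; exact_mod_cast abs_nonneg _
      have hQ0 : 0 ≤ Q := by rw [hQdef]; exact_mod_cast abs_nonneg _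
      have hPsq : P ^ 2 = ((pA x y : ℤ) : ℝ) ^ 2 := by
        rw [hPdef, Int.cast_abs, sq_abs]
      have hQsq : Q ^ 2 = ((pB x y : ℤ) : ℝ) ^ 2 := by
        rw [hQdef, Int.cast_abs, sq_abs]
      have hsumint : (pA x y)^2 + (pB x y)^2 = 2*((x.1-y.1)^2 + (x.2-y.2)^2) := by
        simp only [pA, pB]; ring
      have hsum : ((pA x y : ℤ):ℝ)^2 + ((pB x y : ℤ):ℝ)^2 = 2*d^2 := by
        have hcast := congrArg (fun z : ℤ => (z:ℝ)) hsumint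
        push_cast at hcast
        rw [hdsq]; linarith [hcast]
      have hPQ : P + Q ≤ 2 * d := by
        apply le_of_sq_le_sq' (by linarith) (by linarith)
        nlinarith [sq_nonneg (P - Q), hsum, hPsq, hQsq]
      rw [show |((pA x y : ℤ):ℝ)| = P by rw [hPdef, Int.cast_abs],
        show |((pB x y : ℤ):ℝ)| = Q by rw [hQdef, Int.cast_abs]]
      nlinarith [hPsq, hQsq, sq_nonneg P, sq_nonneg Q,
        mul_le_mul_of_nonneg_left hPQ (by linarith : (0:ℝ) ≤ 8*((n:ℝ)-1))]
    have hden : (0:ℝ) < ((n : ℝ) - 2) ^ 2 := by nlinarith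
    have hc0 : (0:ℝ) ≤ 2 * M / ((n : ℝ) - 2) ^ 2 := by positivity
    have h3 : (2 * M / ((n : ℝ) - 2) ^ 2) * ((Zb ((n:ℤ)-1) x x y : ℤ) : ℝ)
        ≤ (2 * M / ((n : ℝ) - 2) ^ 2) * (16 * ((n:ℝ) - 1) * d) :=
      mul_le_mul_of_nonneg_left hZval hc0
    have key : 32 * (n:ℝ) * ((n:ℝ) - 1) ≤ 150 * ((n:ℝ) - 2) ^ 2 := by
      nlinarith [sq_nonneg ((n:ℝ) - 4)]
    have h4 : (2 * M / ((n : ℝ) - 2) ^ 2) * (16 * ((n:ℝ) - 1) * d) ≤ 150 * M * d / n := by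
      rw [div_mul_eq_mul_div, div_le_div_iff₀ hden hn0]
      have h5 := mul_le_mul_of_nonneg_left key (mul_nonneg hM0 hd0)
      nlinarith [h5]
    linarith
  · -- trivial branch
    have h5d : (n:ℝ) ≤ 5 * eucDist x y := by
      by_cases h4 : 4 ≤ n
      · have := hmain
        have hh : ¬(2 * eucDist x y ≤ (n:ℝ) - 3) := fun hc => hmain ⟨h4, hc⟩
        push_neg at hh
        linarith
      · have : n ≤ 3 := by omega
        have : (n:ℝ) ≤ 3 := by exact_mod_cast this
        linarith
    rw [le_div_iff₀ hn0]
    nlinarith [mul_nonneg (sub_nonneg.mpr hFM) hn0.le, mul_nonneg hM0 (by linarith : (0:ℝ) ≤ 5 * eucDist x y - n)]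

set_option maxHeartbeats 1600000 in
/-- There exist universal constants `C > 0`, `β > 0` such that for
every `θ ∈ [0,1)`, every integer `n ≥ 1` with `θ·n² ≤ 1`, every `v₀ ∈ ℤ²` and every
`H : ℤ² → ℝ` which is nonnegative on the (Euclidean) disc `|v - v₀| ≤ 2n` and massive
discrete harmonic (with killing parameter `θ`) on the disc `|v - v₀| ≤ 2n - 1`, one has
`|H(v₂) - H(v₁)| ≤ C·(|v₂ - v₁|/n)^β · max{H(v) : |v - v₀| ≤ 2n}` for all `v₁, v₂`
with `|v₁ - v₀| ≤ n` and `|v₂ - v₀| ≤ n`. -/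
theorem statement10 :
    ∃ C : ℝ, 0 < C ∧ ∃ β : ℝ, 0 < β ∧
      ∀ (θ : ℝ), 0 ≤ θ → θ < 1 → ∀ (n : ℕ), 1 ≤ n → θ * (n : ℝ) ^ 2 ≤ 1 →
      ∀ (v₀ : V) (H : V → ℝ),
        (∀ v : V, eucDist v v₀ ≤ 2 * n → 0 ≤ H v) →
        (∀ v : V, eucDist v v₀ ≤ 2 * n - 1 → MassiveHarmonicAt θ H v) →
        ∀ v₁ v₂ : V, eucDist v₁ v₀ ≤ n → eucDist v₂ v₀ ≤ n →
          |H v₂ - H v₁| ≤ C * (eucDist v₂ v₁ / n) ^ β *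
            sSup (H '' {v : V | eucDist v v₀ ≤ 2 * n}) := by
  refine ⟨2000, by norm_num, 1, by norm_num, ?_⟩
  intro θ hθ0 hθ1 n hn1 hθn v₀ H hpos hharm v₁ v₂ hv₁ hv₂
  have hn0 : (0:ℝ) < n := by exact_mod_cast hn1
  have hn1R : (1:ℝ) ≤ n := by exact_mod_cast hn1
  set M := sSup (H '' {v : V | eucDist v v₀ ≤ 2 * n}) with hMdef
  -- boundedness facts
  have hfin : ({v : V | eucDist v v₀ ≤ 2 * n}).Finite := by
    apply Set.Finite.subset (Finset.finite_toSet
      (Finset.Icc (v₀.1 - 2*(n:ℤ), v₀.2 - 2*(n:ℤ)) (v₀.1 + 2*(n:ℤ), v₀.2 + 2*(n:ℤ))))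
    intro v hv
    simp only [Set.mem_setOf_eq] at hv
    obtain ⟨hc1, hc2⟩ := eucDist_coord hv
    have hc1' : |v.1 - v₀.1| ≤ 2*(n:ℤ) := by exact_mod_cast hc1
    have hc2' : |v.2 - v₀.2| ≤ 2*(n:ℤ) := by exact_mod_cast hc2
    rw [abs_le] at hc1' hc2'
    simp only [Finset.coe_Icc, Set.mem_Icc, Prod.le_def]
    refine ⟨⟨?_, ?_⟩, ?_, ?_⟩ <;> omega
  have hbdd : BddAbove (H '' {v : V | eucDist v v₀ ≤ 2 * n}) := (hfin.image H).bddAbove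
  have hHle : ∀ v : V, eucDist v v₀ ≤ 2 * n → H v ≤ M :=
    fun v hv => le_csSup hbdd ⟨v, hv, rfl⟩
  have hv₀mem : eucDist v₀ v₀ ≤ 2 * (n:ℝ) := by rw [eucDist_self]; positivity
  have hM0 : 0 ≤ M := le_trans (hpos v₀ hv₀mem) (hHle v₀ hv₀mem)
  have hHM : ∀ v : V, eucDist v v₀ ≤ 2 * n → 0 ≤ H v ∧ H v ≤ M :=
    fun v hv => ⟨hpos v hv, hHle v hv⟩
  rw [Real.rpow_one]
  have hd0 : 0 ≤ eucDist v₂ v₁ := eucDist_nonneg _ _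
  by_cases hpar : Even ((v₂.1 - v₁.1) + (v₂.2 - v₁.2))
  · have h := even_case θ hθ0 hθ1 n hn1 v₀ H M hM0 hHM hharm v₂ v₁
      (by linarith) (by linarith) hpar
    have hnn : 0 ≤ M * eucDist v₂ v₁ / n := by positivity
    have e : 2000 * (eucDist v₂ v₁ / n) * M - 150 * M * eucDist v₂ v₁ / n
        = 1850 * (M * eucDist v₂ v₁ / n) := by ring
    linarith
  · -- opposite parity: one-step reduction through the neighbours of v₂
    have hne : v₂ ≠ v₁ := by
      intro he
      apply hpar
      rw [he]
      simp
    have hd1 : 1 ≤ eucDist v₂ v₁ := one_le_eucDist hne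
    have hharm2 : MassiveHarmonicAt θ H v₂ := hharm v₂ (by linarith)
    set d := eucDist v₂ v₁ with hddef
    have hstep : ∀ e : V, e.1^2 + e.2^2 = 1 →
        Even (((v₂ + e).1 - v₁.1) + ((v₂ + e).2 - v₁.2)) →
        |H (v₂ + e) - H v₁| ≤ 300 * M * d / n := by
      intro e he hpar'
      have hu2 : eucDist (v₂ + e) v₂ = 1 := eucDist_unit v₂ e he
      have hub : eucDist (v₂ + e) v₀ ≤ (n:ℝ) + 1 := by
        have := eucDist_triangle (v₂ + e) v₂ v₀
        linarith
      have huv₁ : eucDist (v₂ + e) v₁ ≤ 2 * d := by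
        have := eucDist_triangle (v₂ + e) v₂ v₁
        rw [hddef]
        linarith
      have h := even_case θ hθ0 hθ1 n hn1 v₀ H M hM0 hHM hharm (v₂ + e) v₁
        hub (by linarith) hpar'
      have hmono : 150 * M * eucDist (v₂ + e) v₁ ≤ 300 * M * d := by
        nlinarith [huv₁, hM0, eucDist_nonneg (v₂ + e) v₁]
      have hmono' : 150 * M * eucDist (v₂ + e) v₁ / n ≤ 300 * M * d / n := by
        rw [div_le_div_iff₀ hn0 hn0]
        nlinarith [hmono, hn0]
      linarith
    have p1 : Even (((v₂ + ((1:ℤ),(0:ℤ))).1 - v₁.1) + ((v₂ + ((1:ℤ),(0:ℤ))).2 - v₁.2)) := by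
      simp only [Prod.fst_add, Prod.snd_add]
      simp only [Int.even_iff] at hpar ⊢
      omega
    have p2 : Even (((v₂ + ((-1:ℤ),(0:ℤ))).1 - v₁.1) + ((v₂ + ((-1:ℤ),(0:ℤ))).2 - v₁.2)) := by
      simp only [Prod.fst_add, Prod.snd_add]
      simp only [Int.even_iff] at hpar ⊢
      omega
    have p3 : Even (((v₂ + ((0:ℤ),(1:ℤ))).1 - v₁.1) + ((v₂ + ((0:ℤ),(1:ℤ))).2 - v₁.2)) := by
      simp only [Prod.fst_add, Prod.snd_add]
      simp only [Int.even_iff] at hpar ⊢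
      omega
    have p4 : Even (((v₂ + ((0:ℤ),(-1:ℤ))).1 - v₁.1) + ((v₂ + ((0:ℤ),(-1:ℤ))).2 - v₁.2)) := by
      simp only [Prod.fst_add, Prod.snd_add]
      simp only [Int.even_iff] at hpar ⊢
      omega
    have h1 := hstep ((1:ℤ),(0:ℤ)) (by norm_num) p1
    have h2 := hstep ((-1:ℤ),(0:ℤ)) (by norm_num) p2
    have h3 := hstep ((0:ℤ),(1:ℤ)) (by norm_num) p3
    have h4 := hstep ((0:ℤ),(-1:ℤ)) (by norm_num) p4
    obtain ⟨q1, q2⟩ := hHM v₁ (by linarith)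
    have hkey : H v₂ - H v₁ = ((1-θ)/4) *
        ((H (v₂ + ((1:ℤ),(0:ℤ))) - H v₁) + (H (v₂ + ((-1:ℤ),(0:ℤ))) - H v₁)
        + (H (v₂ + ((0:ℤ),(1:ℤ))) - H v₁) + (H (v₂ + ((0:ℤ),(-1:ℤ))) - H v₁))
        - θ * H v₁ := by
      rw [MassiveHarmonicAt] at hharm2
      rw [hharm2]
      ring
    have habs4 := abs_comb hθ0 hθ1 (rfl :
        ((1-θ)/4) * ((H (v₂ + ((1:ℤ),(0:ℤ))) - H v₁) + (H (v₂ + ((-1:ℤ),(0:ℤ))) - H v₁)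
        + (H (v₂ + ((0:ℤ),(1:ℤ))) - H v₁) + (H (v₂ + ((0:ℤ),(-1:ℤ))) - H v₁))
        = ((1-θ)/4) * ((H (v₂ + ((1:ℤ),(0:ℤ))) - H v₁) + (H (v₂ + ((-1:ℤ),(0:ℤ))) - H v₁)
        + (H (v₂ + ((0:ℤ),(1:ℤ))) - H v₁) + (H (v₂ + ((0:ℤ),(-1:ℤ))) - H v₁)))
    have htri : |H v₂ - H v₁| ≤ |((1-θ)/4) *
        ((H (v₂ + ((1:ℤ),(0:ℤ))) - H v₁) + (H (v₂ + ((-1:ℤ),(0:ℤ))) - H v₁)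
        + (H (v₂ + ((0:ℤ),(1:ℤ))) - H v₁) + (H (v₂ + ((0:ℤ),(-1:ℤ))) - H v₁))|
        + θ * H v₁ := by
      rw [hkey]
      have := abs_sub (((1-θ)/4) *
        ((H (v₂ + ((1:ℤ),(0:ℤ))) - H v₁) + (H (v₂ + ((-1:ℤ),(0:ℤ))) - H v₁)
        + (H (v₂ + ((0:ℤ),(1:ℤ))) - H v₁) + (H (v₂ + ((0:ℤ),(-1:ℤ))) - H v₁)))
        (θ * H v₁)
      rw [abs_of_nonneg (mul_nonneg hθ0 q1)] at this
      linarith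
    -- killing term
    have hkill : θ * H v₁ ≤ M * d / n := by
      have s1 : θ * H v₁ ≤ θ * M := mul_le_mul_of_nonneg_left q2 hθ0
      have s2 : θ * M * (n:ℝ)^2 ≤ M := by
        have := mul_le_mul_of_nonneg_left hθn hM0
        nlinarith
      have s3 : M ≤ M * d * n := by
        nlinarith [mul_nonneg hM0 (sub_nonneg.mpr hd1),
          mul_nonneg (mul_nonneg hM0 hd0) (sub_nonneg.mpr hn1R)]
      have s4 : θ * H v₁ * ((n:ℝ) * n) ≤ M := by
        nlinarith [mul_le_mul_of_nonneg_right s1 (mul_nonneg hn0.le hn0.le), s2]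
      rw [le_div_iff₀ hn0]
      have s5 : (θ * H v₁ * (n:ℝ)) * n ≤ (M * d) * n := by
        have e1 : (θ * H v₁ * (n:ℝ)) * n = θ * H v₁ * ((n:ℝ) * n) := by ring
        have e2 : (M * d) * n = M * d * n := by ring
        rw [e1, e2]; exact le_trans s4 s3
      exact le_of_mul_le_mul_right s5 hn0
    have hfinal : |H v₂ - H v₁| ≤ 301 * (M * d / n) := by
      have hsum : (1/4) * (|H (v₂ + ((1:ℤ),(0:ℤ))) - H v₁| + |H (v₂ + ((-1:ℤ),(0:ℤ))) - H v₁|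
          + |H (v₂ + ((0:ℤ),(1:ℤ))) - H v₁| + |H (v₂ + ((0:ℤ),(-1:ℤ))) - H v₁|)
          ≤ 300 * M * d / n := by linarith
      have t1 : |H v₂ - H v₁| ≤ 300 * M * d / n + θ * H v₁ := by
        linarith [htri, habs4, hsum]
      have t2 : 300 * M * d / (n:ℝ) + M * d / (n:ℝ) = 301 * (M * d / (n:ℝ)) := by ring
      linarith [t1, hkill, t2]
    have hnn : 0 ≤ M * d / n := by positivity
    have e : 2000 * (d / n) * M = 2000 * (M * d / n) := by ring
    linarith
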